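/- If u₁, u₂, m are rational numbers such that the denominator D = (u₁+u₂)m² + (−2u₁u₂+2)m − u₁ − u₂ is nonzero, and v₁ = ((u₁+u₂)u₂m² + (2u₁+2u₂)m − u₁u₂ + u₂² + 2)/D, v₂ = ((u₁+u₂)u₁m² + (2u₁+2u₂)m + u₁² − u₁u₂ + 2)/D, then (u₁²+1)(v₁²+1) = (u₂²+1)(v₂²+1). -/

import Mathlib

theorem hexagon_condition_solution (u1 u2 m D v1 v2 : ℚ)
    (hD : D = (u1 + u2) * m^2 + (-(2 * u1 * u2) + 2) * m - u1 - u2)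
    (hD0 : D ≠ 0)
    (hv1 : v1 = ((u1 + u2) * u2 * m^2 + (2 * u1 + 2 * u2) * m
      - u1 * u2 + u2^2 + 2) / D)
    (hv2 : v2 = ((u1 + u2) * u1 * m^2 + (2 * u1 + 2 * u2) * m
      + u1^2 - u1 * u2 + 2) / D) :
    (u1^2 + 1) * (v1^2 + 1) = (u2^2 + 1) * (v2^2 + 1) := by
  subst hv1 hv2 hD
  rw [div_pow, div_pow, div_add_one (pow_ne_zero 2 hD0), div_add_one (pow_ne_zero 2 hD0),
    mul_div_assoc', mul_div_assoc', div_left_inj' (pow_ne_zero 2 hD0)]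
  ring
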